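/- Let x⊗h and y⊗k be infinitesimal transvections on a finite-dimensional vector space V over a field F of characteristic not 2, with F·x ≠ F·y and ker h ≠ ker k. If h(y) = 0 and k(x) ≠ 0, then the Lie subalgebra of gl(V) generated by x⊗h and y⊗k is isomorphic to the three-dimensional Heisenberg Lie algebra. -/

import Mathlib

attribute [local instance 100] LieRing.ofAssociativeRing

/-- two infinitesimal transvections `x⊗h`, `y⊗k` with distinct centres
and distinct axes, `h y = 0` and `k x ≠ 0`, generate a Lie algebra isomorphic to the
3-dimensional Heisenberg Lie algebra. -/
theorem extraspecial_pair_heisenberg {F V : Type*} [Field F]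
    [AddCommGroup V] [Module F V] [FiniteDimensional F V]
    (h2 : (2 : F) ≠ 0) (x y : V) (h k : Module.Dual F V)
    (hx : x ≠ 0) (hy : y ≠ 0) (hh : h ≠ 0) (hk : k ≠ 0)
    (hhx : h x = 0) (hky : k y = 0)
    (hcentres : (Submodule.span F {x} : Submodule F V) ≠ Submodule.span F {y})
    (haxes : LinearMap.ker h ≠ LinearMap.ker k)
    (hhy : h y = 0) (hkx : k x ≠ 0) :
    ∃ b : Module.Basis (Fin 3) F
        (LieSubalgebra.lieSpan F (Module.End F V) {h.smulRight x, k.smulRight y}),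
      ⁅b 0, b 1⁆ = b 2 ∧
      ∀ w : LieSubalgebra.lieSpan F (Module.End F V) {h.smulRight x, k.smulRight y},
        ⁅b 2, w⁆ = 0 := by
  classical
  set A : Module.End F V := h.smulRight x with hA
  set B : Module.End F V := k.smulRight y with hB
  set C : Module.End F V := ⁅A, B⁆ with hCdef
  -- x and y are linearly independent
  have hxy : ∀ a b : F, a • x + b • y = 0 → a = 0 ∧ b = 0 := by
    intro a b hab
    by_cases ha : a = 0
    · subst ha
      rw [zero_smul, zero_add] at hab
      rcases smul_eq_zero.mp hab with hb | hy0
      · exact ⟨rfl, hb⟩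
      · exact absurd hy0 hy
    · exfalso
      have hb : b ≠ 0 := by
        rintro rfl
        rw [zero_smul, add_zero] at hab
        rcases smul_eq_zero.mp hab with h' | h'
        exacts [ha h', hx h']
      have hax : a • x = -(b • y) := eq_neg_of_add_eq_zero_left hab
      have hxval : x = (a⁻¹ * -b) • y := by
        have hx1 : x = a⁻¹ • (a • x) := by
          rw [smul_smul, inv_mul_cancel₀ ha, one_smul]
        rw [hx1, hax, smul_neg, smul_smul, mul_neg, neg_smul]
      apply hcentres
      rw [hxval]
      exact Submodule.span_singleton_smul_eq
        (isUnit_iff_ne_zero.mpr (by simp [ha, hb])) y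
  -- formula for C
  have hCapp : ∀ v, C v = (-(h v * k x)) • y := by
    intro v
    have : C v = A (B v) - B (A v) := rfl
    rw [this]
    simp only [hA, hB, LinearMap.smulRight_apply, map_smul, smul_smul]
    rw [hhy]
    simp [mul_comm]
  have hAC : ⁅A, C⁆ = 0 := by
    ext v
    show A (C v) - C (A v) = 0
    rw [hCapp, hCapp]
    simp only [hA, LinearMap.smulRight_apply, map_smul, smul_smul]
    rw [hhy, hhx]
    simp
  have hBC : ⁅B, C⁆ = 0 := by
    ext v
    show B (C v) - C (B v) = 0
    rw [hCapp, hCapp]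
    simp only [hB, LinearMap.smulRight_apply, map_smul, smul_smul]
    rw [hky, hhy]
    simp
  have hCA : ⁅C, A⁆ = 0 := by rw [← lie_skew, hAC, neg_zero]
  have hCB : ⁅C, B⁆ = 0 := by rw [← lie_skew, hBC, neg_zero]
  -- the candidate family
  set f : Fin 3 → Module.End F V := ![A, B, C] with hf
  have hrange : Set.range f = {A, B, C} := by
    ext u
    constructor
    · rintro ⟨i, rfl⟩
      fin_cases i <;> simp [hf]
    · intro hu
      simp only [Set.mem_insert_iff, Set.mem_singleton_iff] at hu
      rcases hu with rfl | rfl | rfl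
      exacts [⟨0, rfl⟩, ⟨1, rfl⟩, ⟨2, rfl⟩]
  set p : Submodule F (Module.End F V) := Submodule.span F (Set.range f) with hp
  -- linear independence
  have li : LinearIndependent F f := by
    rw [Fintype.linearIndependent_iff]
    intro g hg
    have hg' : g 0 • A + g 1 • B + g 2 • C = 0 := by
      rwa [Fin.sum_univ_three] at hg
    -- evaluate at x
    have e1 : (g 1 * k x) • y = 0 := by
      have := LinearMap.congr_fun hg' x
      simpa [hA, hB, LinearMap.smulRight_apply, hhx, hCapp, smul_smul] using this
    have hg1 : g 1 = 0 := by
      rcases smul_eq_zero.mp e1 with h' | h'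
      · rcases mul_eq_zero.mp h' with h'' | h''
        exacts [h'', absurd h'' hkx]
      · exact absurd h' hy
    -- pick v with h v ≠ 0
    obtain ⟨v, hv⟩ : ∃ v, h v ≠ 0 := by
      by_contra hcon
      push_neg at hcon
      exact hh (LinearMap.ext fun v => by simp [hcon v])
    have e2 : (g 0 * h v) • x + (-(g 2 * (h v * k x))) • y = 0 := by
      have := LinearMap.congr_fun hg' v
      rw [hg1] at this
      simpa [hA, hB, LinearMap.smulRight_apply, hCapp, smul_smul,
        mul_comm, mul_left_comm, mul_assoc, mul_neg, neg_mul] using this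
    obtain ⟨ea, eb⟩ := hxy _ _ e2
    have hg0 : g 0 = 0 := by
      rcases mul_eq_zero.mp ea with h' | h'
      exacts [h', absurd h' hv]
    have hg2 : g 2 = 0 := by
      have := neg_eq_zero.mp eb
      rcases mul_eq_zero.mp this with h' | h'
      · exact h'
      · rcases mul_eq_zero.mp h' with h'' | h''
        exacts [absurd h'' hv, absurd h'' hkx]
    intro i
    fin_cases i <;> assumption
  have hAp : A ∈ p := Submodule.subset_span ⟨0, rfl⟩
  have hBp : B ∈ p := Submodule.subset_span ⟨1, rfl⟩
  have hCp : C ∈ p := Submodule.subset_span ⟨2, rfl⟩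
  -- p is closed under brackets
  have key : ∀ u ∈ ({A, B, C} : Set (Module.End F V)), ∀ w ∈ p, ⁅u, w⁆ ∈ p := by
    intro u hu w hw
    induction hw using Submodule.span_induction with
    | mem w hw =>
      rw [hrange] at hw
      simp only [Set.mem_insert_iff, Set.mem_singleton_iff] at hu hw
      rcases hu with rfl | rfl | rfl <;> rcases hw with rfl | rfl | rfl
      · rw [lie_self]; exact p.zero_mem
      · exact hCp
      · rw [hAC]; exact p.zero_mem
      · rw [← lie_skew]; exact p.neg_mem hCp
      · rw [lie_self]; exact p.zero_mem
      · rw [hBC]; exact p.zero_mem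
      · rw [hCA]; exact p.zero_mem
      · rw [hCB]; exact p.zero_mem
      · rw [lie_self]; exact p.zero_mem
    | zero => rw [lie_zero]; exact p.zero_mem
    | add w₁ w₂ _ _ ih1 ih2 => rw [lie_add]; exact p.add_mem ih1 ih2
    | smul c w _ ih => rw [lie_smul]; exact p.smul_mem c ih
  have lie_mem' : ∀ {u w : Module.End F V}, u ∈ p → w ∈ p → ⁅u, w⁆ ∈ p := by
    intro u w hu hw
    induction hu using Submodule.span_induction with
    | mem u hu => exact key u (by rw [← hrange]; exact hu) w hw
    | zero => rw [zero_lie]; exact p.zero_mem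
    | add u₁ u₂ _ _ ih1 ih2 => rw [add_lie]; exact p.add_mem ih1 ih2
    | smul c u _ ih => rw [smul_lie]; exact p.smul_mem c ih
  set S : LieSubalgebra F (Module.End F V) :=
    { p with lie_mem' := fun hu hw => lie_mem' hu hw } with hS
  have hple : p ≤ (LieSubalgebra.lieSpan F (Module.End F V) {A, B}).toSubmodule := by
    rw [hp, Submodule.span_le, hrange]
    intro u hu
    simp only [Set.mem_insert_iff, Set.mem_singleton_iff] at hu
    rcases hu with rfl | rfl | rfl
    · exact LieSubalgebra.subset_lieSpan (Set.mem_insert _ _)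
    · exact LieSubalgebra.subset_lieSpan (Set.mem_insert_of_mem _ rfl)
    · exact LieSubalgebra.lie_mem _
        (LieSubalgebra.subset_lieSpan (Set.mem_insert _ _))
        (LieSubalgebra.subset_lieSpan (Set.mem_insert_of_mem _ rfl))
  have hspan : LieSubalgebra.lieSpan F (Module.End F V) {A, B} = S := by
    apply le_antisymm
    · rw [LieSubalgebra.lieSpan_le]
      intro u hu
      simp only [Set.mem_insert_iff, Set.mem_singleton_iff] at hu
      rcases hu with rfl | rfl
      · exact hAp
      · exact hBp
    · intro u hu
      exact hple hu
  have hpeq : p = (LieSubalgebra.lieSpan F (Module.End F V) {A, B}).toSubmodule := by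
    rw [hspan]
  let e := LinearEquiv.ofEq p _ hpeq
  let b : Module.Basis (Fin 3) F
      (LieSubalgebra.lieSpan F (Module.End F V) {A, B}) :=
    (Module.Basis.span li).map e
  have hb : ∀ i, (b i : Module.End F V) = f i := by
    intro i
    show ((e ((Module.Basis.span li) i)) : Module.End F V) = f i
    rw [LinearEquiv.coe_ofEq_apply]
    exact congrArg Subtype.val (Module.Basis.span_apply li i)
  have hcentral : ∀ u ∈ p, ⁅C, u⁆ = 0 := by
    intro u hu
    induction hu using Submodule.span_induction with
    | mem u hu =>
      rw [hrange] at hu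
      simp only [Set.mem_insert_iff, Set.mem_singleton_iff] at hu
      rcases hu with rfl | rfl | rfl
      exacts [hCA, hCB, lie_self C]
    | zero => exact lie_zero C
    | add u₁ u₂ _ _ ih1 ih2 => rw [lie_add, ih1, ih2, add_zero]
    | smul c u _ ih => rw [lie_smul, ih, smul_zero]
  refine ⟨b, ?_, ?_⟩
  · apply Subtype.ext
    rw [LieSubalgebra.coe_bracket, hb, hb, hb]
    rfl
  · intro w
    apply Subtype.ext
    rw [LieSubalgebra.coe_bracket, hb]
    show ⁅C, (w : Module.End F V)⁆ = 0
    exact hcentral _ (by rw [hpeq]; exact w.2)
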